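/- Let (T,μ,η) be a monad and F an endofunctor on C with a distributive law λ : FT ⟶ TF that is ω-suitable, meaning η_{F1} ∘ F(!_{TX}) = T(F !_X) ∘ λ_X for every object X (where !_A denotes the unique map to the terminal object 1). Then there is a distributive law ξ of T^ over F^ ∘ ▶ on Sh_C(ω) given at stage 0 by id_1, at stage 1 by η_{F1}, at stage n+2 by λ_{Y_{n+1}}, and at stage ω by the induced mediating map. -/

import Mathlib

open CategoryTheory CategoryTheory.Limits Opposite

set_option linter.unusedSectionVars false

universe v u

/-- A law distributing a monad `(T,μ,η)` over an endofunctor `F`. -/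
structure DistLaw {C : Type u} [Category.{v} C] (T : Monad C) (F : C ⥤ C) where
  nat : T.toFunctor ⋙ F ⟶ F ⋙ T.toFunctor
  mu_compat : ∀ X : C, F.map (T.μ.app X) ≫ nat.app X =
      nat.app (T.obj X) ≫ T.map (nat.app X) ≫ T.μ.app (F.obj X)
  eta_compat : ∀ X : C, F.map (T.η.app X) ≫ nat.app X = T.η.app (F.obj X)

namespace OmegaSuitAux

variable {C : Type u} [Category.{v} C] [HasTerminal C]

theorem nat_app_eqToHom {D : Type*} [Category D] {G₁ G₂ : D ⥤ C} (α : G₁ ⟶ G₂)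
    {A B : D} (h : A = B) :
    α.app A ≫ eqToHom (congrArg G₂.obj h) = eqToHom (congrArg G₁.obj h) ≫ α.app B := by
  subst h; simp

theorem suit' (T : Monad C) (F : C ⥤ C) (l : DistLaw T F)
    (hsuit : ∀ X : C,
      l.nat.app X ≫ T.map (F.map (terminal.from X)) =
        F.map (terminal.from (T.obj X)) ≫ T.η.app (F.obj (⊤_ C)))
    {Z : C} (t : IsTerminal Z) (X : C) :
    l.nat.app X ≫ T.map (F.map (t.from X)) = F.map (t.from (T.obj X)) ≫ T.η.app (F.obj Z) := by
  have hiso : ∀ A : C, t.from A = terminal.from A ≫ (terminalIsTerminal.uniqueUpToIso t).hom :=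
    fun A => t.hom_ext _ _
  rw [hiso X, hiso (T.obj X), F.map_comp, F.map_comp, T.map_comp, ← Category.assoc,
    hsuit X, Category.assoc, Category.assoc]
  congr 1
  exact (T.η.naturality _).symm

variable (T : Monad C) (F : C ⥤ C) (l : DistLaw T F)
  (L : (ℕᵒᵖ ⥤ C) ⥤ ℕᵒᵖ ⥤ C)
  (h0 : ∀ X : ℕᵒᵖ ⥤ C, IsTerminal ((L.obj X).obj (op 0)))
  (h1 : ∀ (X : ℕᵒᵖ ⥤ C) (n : ℕ), (L.obj X).obj (op (n + 1)) = X.obj (op n))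

/-- The components of the distributive law. -/
def xiApp (Y : ℕᵒᵖ ⥤ C) :
    ∀ n : ℕ, F.obj ((L.obj (Y ⋙ T.toFunctor)).obj (op n)) ⟶ T.obj (F.obj ((L.obj Y).obj (op n)))
  | 0 => F.map ((h0 Y).from _) ≫ T.η.app _
  | (n + 1) =>
      eqToHom (congrArg F.obj (h1 (Y ⋙ T.toFunctor) n)) ≫ l.nat.app (Y.obj (op n)) ≫
        eqToHom (congrArg (fun c => T.obj (F.obj c)) (h1 Y n).symm)

theorem xiApp_zero (Y : ℕᵒᵖ ⥤ C) :
    xiApp T F l L h0 h1 Y 0 = F.map ((h0 Y).from _) ≫ T.η.app _ := rfl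

theorem xiApp_succ (Y : ℕᵒᵖ ⥤ C) (n : ℕ) :
    xiApp T F l L h0 h1 Y (n + 1) =
      eqToHom (congrArg F.obj (h1 (Y ⋙ T.toFunctor) n)) ≫ l.nat.app (Y.obj (op n)) ≫
        eqToHom (congrArg (fun c => T.obj (F.obj c)) (h1 Y n).symm) := rfl

include h0 in
theorem key (Y : ℕᵒᵖ ⥤ C) {A : C} (g g' : A ⟶ (L.obj Y).obj (op 0)) :
    F.map g ≫ T.η.app (F.obj ((L.obj Y).obj (op 0))) =
      F.map g' ≫ T.η.app (F.obj ((L.obj Y).obj (op 0))) := by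
  rw [(h0 Y).hom_ext g g']


include h0 h1 in
theorem xiApp_natural
    (hsuit : ∀ X : C,
      l.nat.app X ≫ T.map (F.map (terminal.from X)) =
        F.map (terminal.from (T.obj X)) ≫ T.η.app (F.obj (⊤_ C)))
    (hres : ∀ (X : ℕᵒᵖ ⥤ C) (n m : ℕ) (h : m ≤ n),
      (L.obj X).map (homOfLE (Nat.succ_le_succ h)).op =
        eqToHom (h1 X n) ≫ X.map (homOfLE h).op ≫ eqToHom (h1 X m).symm)
    (Y : ℕᵒᵖ ⥤ C) {n m : ℕ} (h : m ≤ n) :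
    F.map ((L.obj (Y ⋙ T.toFunctor)).map (homOfLE h).op) ≫ xiApp T F l L h0 h1 Y m =
      xiApp T F l L h0 h1 Y n ≫ T.map (F.map ((L.obj Y).map (homOfLE h).op)) := by
  match n, m, h with
  | 0, 0, h =>
      have e : (homOfLE h).op = 𝟙 (op (0 : ℕ)) := rfl
      rw [e]; simp
  | (k+1), 0, h =>
      rw [xiApp_zero, xiApp_succ]
      have e2 : eqToHom (congrArg (fun c => T.obj (F.obj c)) (h1 Y k).symm) =
          T.map (F.map (eqToHom (h1 Y k).symm)) := by simp [eqToHom_map]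
      simp only [Category.assoc]
      rw [e2, ← T.map_comp, ← F.map_comp,
        (h0 Y).hom_ext (eqToHom (h1 Y k).symm ≫ (L.obj Y).map (homOfLE h).op)
          ((h0 Y).from _),
        suit' T F l hsuit (h0 Y) (Y.obj (op k))]
      have e3 : eqToHom (congrArg F.obj (h1 (Y ⋙ T.toFunctor) k)) =
          F.map (eqToHom (h1 (Y ⋙ T.toFunctor) k)) := by simp [eqToHom_map]
      rw [e3, ← F.map_comp_assoc, ← F.map_comp_assoc]
      exact key T F L h0 Y _ _
  | (k+1), (j+1), h =>
      have h' : j ≤ k := Nat.succ_le_succ_iff.mp h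
      have e : (homOfLE h).op = (homOfLE (Nat.succ_le_succ h')).op := rfl
      rw [e, xiApp_succ, xiApp_succ, hres Y k j h', hres (Y ⋙ T.toFunctor) k j h']
      simp only [Functor.map_comp, Category.assoc, eqToHom_map, eqToHom_trans_assoc,
        eqToHom_refl, Category.id_comp, Functor.comp_map]
      rw [reassoc_of% (l.nat.naturality (Y.map (homOfLE h').op))]

include h0 h1 in
theorem xiApp_naturalY
    (hmap : ∀ {X Y : ℕᵒᵖ ⥤ C} (f : X ⟶ Y) (n : ℕ),
      (L.map f).app (op (n + 1)) =
        eqToHom (h1 X n) ≫ f.app (op n) ≫ eqToHom (h1 Y n).symm)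
    {Y Y' : ℕᵒᵖ ⥤ C} (f : Y ⟶ Y') (n : ℕ) :
    F.map ((L.map (Functor.whiskerRight f T.toFunctor)).app (op n)) ≫ xiApp T F l L h0 h1 Y' n =
      xiApp T F l L h0 h1 Y n ≫ T.map (F.map ((L.map f).app (op n))) := by
  cases n with
  | zero =>
      rw [xiApp_zero, xiApp_zero, Category.assoc,
        ← T.η.naturality (F.map ((L.map f).app (op 0)))]
      simp only [Functor.id_map]
      rw [← F.map_comp_assoc, ← F.map_comp_assoc]
      exact key T F L h0 Y' _ _
  | succ k =>
      rw [xiApp_succ, xiApp_succ, hmap f k, hmap (Functor.whiskerRight f T.toFunctor) k]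
      simp only [Functor.whiskerRight_app, Functor.map_comp, Category.assoc, eqToHom_map,
        eqToHom_trans_assoc, eqToHom_refl, Category.id_comp]
      rw [reassoc_of% (l.nat.naturality (f.app (op k)))]

include T in
theorem eta_map_mu {A B : C} (w : A ⟶ T.obj B) :
    T.η.app A ≫ T.map w ≫ T.μ.app B = w := by
  rw [← Category.assoc, ← T.η.naturality w]
  simp

include h0 h1 in
theorem xi_mu_succ (Y : ℕᵒᵖ ⥤ C) (n : ℕ) :
    F.map (eqToHom (h1 ((Y ⋙ T.toFunctor) ⋙ T.toFunctor) n) ≫ T.μ.app (Y.obj (op n)) ≫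
        eqToHom (h1 (Y ⋙ T.toFunctor) n).symm) ≫ xiApp T F l L h0 h1 Y (n + 1) =
      xiApp T F l L h0 h1 (Y ⋙ T.toFunctor) (n + 1) ≫
        T.map (xiApp T F l L h0 h1 Y (n + 1)) ≫
          T.μ.app (F.obj ((L.obj Y).obj (op (n + 1)))) := by
  rw [xiApp_succ, xiApp_succ]
  simp only [Functor.map_comp, Category.assoc, eqToHom_map, eqToHom_trans_assoc,
    eqToHom_refl, Category.id_comp, Functor.comp_obj]
  rw [← nat_app_eqToHom T.μ (congrArg F.obj (h1 Y n).symm)]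
  rw [reassoc_of% (l.mu_compat (Y.obj (op n)))]

include h0 h1 in
theorem xi_eta_succ (Y : ℕᵒᵖ ⥤ C) (n : ℕ) :
    F.map (eqToHom (h1 Y n) ≫ T.η.app (Y.obj (op n)) ≫
        eqToHom (h1 (Y ⋙ T.toFunctor) n).symm) ≫ xiApp T F l L h0 h1 Y (n + 1) =
      T.η.app (F.obj ((L.obj Y).obj (op (n + 1)))) := by
  rw [xiApp_succ]
  simp only [Functor.map_comp, Category.assoc, eqToHom_map, eqToHom_trans_assoc,
    eqToHom_refl, Category.id_comp]
  rw [reassoc_of% (l.eta_compat (Y.obj (op n)))]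
  rw [nat_app_eqToHom T.η (congrArg F.obj (h1 Y n).symm)]
  simp


end OmegaSuitAux

/-- `Sh_C(ω)` presented as presheaves on the base of successor stages: the index
`n : ℕ` corresponds to the stage `n+1`; the value at stage `0` is the terminal
object and the value at stage `ω` is the limit, both determined by the sheaf
condition.  The pointwise extensions `T^` and `F^` are given by postcomposition, and
the later endofunctor `▶` satisfies `(▶Y)_{n+1} = Y_n` and `(▶Y)_0 = 1`.

Given an ω-suitable distributive law `λ : FT ⟶ TF` — meaning
`η_{F1} ∘ F(!_{TX}) = T(F !_X) ∘ λ_X` — there is a distributive law `ξ` of `T^` over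
`F^ ∘ ▶` on `Sh_C(ω)` given at stage `1` by `η_{F1}` and at stage `n+2` by
`λ_{Y_{n+1}}` (its components at stages `0` and `ω` being the identity of `1` and
the induced mediating map, which are determined by the sheaf condition). -/


theorem omega_suitable_distLaw_extends
    {C : Type u} [Category.{v} C] [HasTerminal C]
    (T : Monad C) (F : C ⥤ C) (l : DistLaw T F)
    (hsuit : ∀ X : C,
      l.nat.app X ≫ T.map (F.map (terminal.from X)) =
        F.map (terminal.from (T.obj X)) ≫ T.η.app (F.obj (⊤_ C)))
    -- the later endofunctor `▶` on `Sh_C(ω)`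
    (L : (ℕᵒᵖ ⥤ C) ⥤ (ℕᵒᵖ ⥤ C))
    (h0 : ∀ X : ℕᵒᵖ ⥤ C, IsTerminal ((L.obj X).obj (op 0)))
    (h1 : ∀ (X : ℕᵒᵖ ⥤ C) (n : ℕ), (L.obj X).obj (op (n + 1)) = X.obj (op n))
    (hres : ∀ (X : ℕᵒᵖ ⥤ C) (n m : ℕ) (h : m ≤ n),
      (L.obj X).map (homOfLE (Nat.succ_le_succ h)).op =
        eqToHom (h1 X n) ≫ X.map (homOfLE h).op ≫ eqToHom (h1 X m).symm)
    (hmap : ∀ {X Y : ℕᵒᵖ ⥤ C} (f : X ⟶ Y) (n : ℕ),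
      (L.map f).app (op (n + 1)) =
        eqToHom (h1 X n) ≫ f.app (op n) ≫ eqToHom (h1 Y n).symm) :
    -- the pointwise extensions of `T` (with its monad structure) and of `F`
    letI E := (Functor.whiskeringRight ℕᵒᵖ C C).obj T.toFunctor
    letI FE := (Functor.whiskeringRight ℕᵒᵖ C C).obj F
    letI G := L ⋙ FE
    ∀ (η' : 𝟭 (ℕᵒᵖ ⥤ C) ⟶ E) (μ' : E ⋙ E ⟶ E),
      (∀ (X : ℕᵒᵖ ⥤ C) (b : ℕᵒᵖ), (η'.app X).app b = T.η.app (X.obj b)) →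
      (∀ (X : ℕᵒᵖ ⥤ C) (b : ℕᵒᵖ), (μ'.app X).app b = T.μ.app (X.obj b)) →
      ∃ Ξ : E ⋙ G ⟶ G ⋙ E,
        -- component at stage 1
        (∀ Y : ℕᵒᵖ ⥤ C,
          (Ξ.app Y).app (op 0) =
            F.map ((h0 Y).from ((L.obj (E.obj Y)).obj (op 0))) ≫
              T.η.app (F.obj ((L.obj Y).obj (op 0)))) ∧
        -- component at stage n+2
        (∀ (Y : ℕᵒᵖ ⥤ C) (n : ℕ),
          (Ξ.app Y).app (op (n + 1)) =
            eqToHom (congrArg F.obj (h1 (E.obj Y) n)) ≫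
              l.nat.app (Y.obj (op n)) ≫
                eqToHom (congrArg (fun c => T.obj (F.obj c)) (h1 Y n).symm)) ∧
        -- compatibility with the multiplication of `T^`
        (∀ Y : ℕᵒᵖ ⥤ C,
          G.map (μ'.app Y) ≫ Ξ.app Y =
            Ξ.app (E.obj Y) ≫ E.map (Ξ.app Y) ≫ μ'.app (G.obj Y)) ∧
        -- compatibility with the unit of `T^`
        (∀ Y : ℕᵒᵖ ⥤ C, G.map (η'.app Y) ≫ Ξ.app Y = η'.app (G.obj Y)) := by
  intro η' μ' hη hμ
  refine ⟨{ app := fun Y =>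
      { app := fun b => OmegaSuitAux.xiApp T F l L h0 h1 Y b.unop,
        naturality := fun b b' f =>
              OmegaSuitAux.xiApp_natural T F l L h0 h1 hsuit hres Y (leOfHom f.unop) },
            naturality := by
              intro Y Y' f
              ext b
              exact OmegaSuitAux.xiApp_naturalY T F l L h0 h1 hmap f b.unop }, ?_, ?_, ?_, ?_⟩
  · intro Y; rfl
  · intro Y n; rfl
  · intro Y
    ext b
    obtain ⟨n⟩ := b
    cases n with
    | zero =>
        show F.map ((L.map (μ'.app Y)).app (op 0)) ≫
            (F.map ((h0 Y).from _) ≫ T.η.app _) =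
          (F.map ((h0 (Y ⋙ T.toFunctor)).from _) ≫ T.η.app _) ≫
            T.map (F.map ((h0 Y).from _) ≫ T.η.app _) ≫ (μ'.app (L.obj Y ⋙ F)).app (op 0)
        rw [hμ]
        simp only [Category.assoc, Functor.comp_obj]
        rw [OmegaSuitAux.eta_map_mu T (F.map ((h0 Y).from _) ≫ T.η.app _),
          ← F.map_comp_assoc, ← F.map_comp_assoc]
        exact OmegaSuitAux.key T F L h0 Y _ _
    | succ k =>
        show F.map ((L.map (μ'.app Y)).app (op (k+1))) ≫
            OmegaSuitAux.xiApp T F l L h0 h1 Y (k+1) =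
          OmegaSuitAux.xiApp T F l L h0 h1 (Y ⋙ T.toFunctor) (k+1) ≫
            T.map (OmegaSuitAux.xiApp T F l L h0 h1 Y (k+1)) ≫ (μ'.app (L.obj Y ⋙ F)).app (op (k+1))
        rw [hmap (μ'.app Y) k, hμ, hμ]
        exact OmegaSuitAux.xi_mu_succ T F l L h0 h1 Y k
  · intro Y
    ext b
    obtain ⟨n⟩ := b
    cases n with
    | zero =>
        show F.map ((L.map (η'.app Y)).app (op 0)) ≫
            (F.map ((h0 Y).from _) ≫ T.η.app _) = (η'.app (L.obj Y ⋙ F)).app (op 0)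
        rw [hη, ← F.map_comp_assoc,
          (h0 Y).hom_ext ((L.map (η'.app Y)).app (op 0) ≫ (h0 Y).from _) (𝟙 _)]
        simp
    | succ k =>
        show F.map ((L.map (η'.app Y)).app (op (k+1))) ≫
            OmegaSuitAux.xiApp T F l L h0 h1 Y (k+1) = (η'.app (L.obj Y ⋙ F)).app (op (k+1))
        rw [hmap (η'.app Y) k, hη, hη]
        exact OmegaSuitAux.xi_eta_succ T F l L h0 h1 Y k
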